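/- Let G be a finite abelian p-group whose i-th layer Ω_i(G)/Ω_{i−1}(G) has F_p-dimension λ_i, and let ν_1 ≥ ν_2 ≥ ... be a partition with ν_i ≤ λ_i for all i. Then ∏_{i≥1} p^{ν_i(λ_i − ν_i)} ≤ ∏_{i≥1} p^{ν_{i+1}(λ_i − ν_i)} · [λ_i − ν_{i+1} choose ν_i − ν_{i+1}]_p ≤ p^{ν_1} · ∏_{i≥1} p^{ν_i(λ_i − ν_i)}. -/

import Mathlib

/-- `Omega p G i` is the subgroup of elements of order dividing `p ^ i`. -/
def Omega (p : ℕ) (G : Type*) [CommGroup G] (i : ℕ) : Subgroup G :=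
  (powMonoidHom (p ^ i) : G →* G).ker

/-- The cardinality of the `i`-th layer `Ω_{i+1}(G)/Ω_i(G)` (with `i` starting at `0`). -/
noncomputable def layerCard (p : ℕ) (G : Type*) [CommGroup G] (i : ℕ) : ℕ :=
  Nat.card (↥(Omega p G (i + 1)) ⧸ (Omega p G i).subgroupOf (Omega p G (i + 1)))

/-- The Gaussian binomial coefficient `[a choose b]_p`: the number of `b`-dimensional
subspaces of an `a`-dimensional vector space over `F_p`. -/
noncomputable def gbin (p a b : ℕ) : ℕ :=
  Nat.card {W : Submodule (ZMod p) (Fin a → ZMod p) // Module.finrank (ZMod p) W = b}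

open Module


section
variable {F : Type*} [Field F] [Finite F]

instance instFinSub (M : Type*) [AddCommGroup M] [Module F M] [Finite M] :
    Finite (Submodule F M) :=
  Finite.of_injective (fun W => (W : Set M)) SetLike.coe_injective

lemma card_sub_eq {M N : Type*} [AddCommGroup M] [Module F M] [AddCommGroup N] [Module F N]
    (e : M ≃ₗ[F] N) (k : ℕ) :
    Nat.card {W : Submodule F M // finrank F W = k}
      = Nat.card {W : Submodule F N // finrank F W = k} := by
  refine Nat.card_congr (Equiv.subtypeEquiv (Submodule.orderIsoMapComap e).toEquiv fun W => ?_)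
  have : finrank F (Submodule.map (e : M →ₗ[F] N) W) = finrank F W := LinearEquiv.finrank_map_eq e W
  simp only [RelIso.coe_fn_toEquiv]
  show finrank F W = k ↔ finrank F (Submodule.map (e : M →ₗ[F] N) W) = k
  rw [this]

end

lemma gbin_lower {p : ℕ} (hp : p.Prime) {n k : ℕ} (h : k ≤ n) :
    p ^ (k * (n - k)) ≤ gbin p n k := by
  haveI : Fact p.Prime := ⟨hp⟩
  set F := ZMod p
  set d := n - k with hd
  have e : ((Fin k → F) × (Fin d → F)) ≃ₗ[F] (Fin n → F) :=
    ((LinearEquiv.sumArrowLequivProdArrow (Fin k) (Fin d) F F).symm.trans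
      (LinearEquiv.funCongrLeft F F ((finCongr (by omega : n = k + d)).trans
        finSumFinEquiv.symm)))
  rw [gbin, ← card_sub_eq e k]
  have hinj : Function.Injective
      (fun f : (Fin k → F) →ₗ[F] (Fin d → F) =>
        (⟨f.graph, by
          rw [LinearMap.graph_eq_range_prod, LinearMap.finrank_range_of_inj, finrank_fin_fun]
          intro x y hxy
          exact congrArg Prod.fst hxy⟩ :
          {W : Submodule F ((Fin k → F) × (Fin d → F)) // finrank F W = k})) := by
    intro f g hfg
    apply LinearMap.ext
    intro x
    have h2 : f.graph = g.graph := congrArg Subtype.val hfg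
    have h1 : (x, f x) ∈ g.graph := by
      rw [← h2]; exact (LinearMap.mem_graph_iff f (x, f x)).mpr rfl
    exact (LinearMap.mem_graph_iff g (x, f x)).mp h1
  have hc := Nat.card_le_card_of_injective _ hinj
  refine le_trans (le_of_eq ?_) hc
  rw [Nat.card_congr (LinearMap.toMatrix' : ((Fin k → F) →ₗ[F] (Fin d → F)) ≃ₗ[F] Matrix (Fin d) (Fin k) F).toEquiv]
  rw [Nat.card_eq_fintype_card]
  show p ^ (k * d) = Fintype.card (Fin d → Fin k → F)
  have hF : Fintype.card F = p := ZMod.card p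
  simp [hF]
  ring


section Aux
variable {F : Type*} [Field F]
variable {M : Type*} [AddCommGroup M] [Module F M]

lemma aux_finrank_map (W : Submodule F (M × F)) (hW : W ≤ LinearMap.ker (LinearMap.snd F M F)) :
    finrank F (W.map (LinearMap.fst F M F)) = finrank F W := by
  have h1 : W.map (LinearMap.fst F M F)
      = LinearMap.range ((LinearMap.fst F M F).comp W.subtype) := by
    rw [LinearMap.range_comp, Submodule.range_subtype]
  rw [h1, LinearMap.finrank_range_of_inj]
  intro x y hxy
  apply Subtype.ext
  have hx := hW x.2
  have hy := hW y.2
  simp only [LinearMap.mem_ker, LinearMap.snd_apply] at hx hy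
  exact Prod.ext hxy (hx.trans hy.symm)

lemma aux_recover (W : Submodule F (M × F)) (hW : W ≤ LinearMap.ker (LinearMap.snd F M F)) :
    (W.map (LinearMap.fst F M F)).map (LinearMap.inl F M F) = W := by
  ext x
  simp only [Submodule.mem_map, LinearMap.fst_apply, LinearMap.inl_apply]
  constructor
  · rintro ⟨m, ⟨v, hv, rfl⟩, rfl⟩
    have h0 : v.2 = 0 := hW hv
    have hv2 : v = (v.1, (0:F)) := Prod.ext rfl h0
    rwa [← hv2]
  · intro hx
    have h0 : x.2 = 0 := hW hx
    exact ⟨x.1, ⟨x, hx, rfl⟩, by rw [← h0]⟩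

-- the inf with the hyperplane is inside the hyperplane
lemma aux_inf_le (W : Submodule F (M × F)) :
    W ⊓ LinearMap.ker (LinearMap.snd F M F) ≤ LinearMap.ker (LinearMap.snd F M F) :=
  inf_le_right

-- finrank of W ⊓ H when W contains a vector with second coordinate 1
lemma aux_finrank_inf [FiniteDimensional F M] (W : Submodule F (M × F)) (w : M × F)
    (hw : w ∈ W) (hw2 : w.2 = 1) {k : ℕ} (hk : finrank F W = k + 1) :
    finrank F ((W ⊓ LinearMap.ker (LinearMap.snd F M F) : Submodule F (M × F))) = k := by
  set g := (LinearMap.snd F M F).comp W.subtype with hg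
  have hsurj : Function.Surjective g := by
    intro c
    refine ⟨⟨c • w, W.smul_mem c hw⟩, ?_⟩
    simp [hg, hw2]
  have hrange : finrank F (LinearMap.range g) = 1 := by
    rw [LinearMap.range_eq_top.mpr hsurj]
    simp [finrank_top]
  have hker : LinearMap.ker g = Submodule.comap W.subtype
      (W ⊓ LinearMap.ker (LinearMap.snd F M F)) := by
    ext x
    simp [hg]
  have hkereq : finrank F (LinearMap.ker g)
      = finrank F ((W ⊓ LinearMap.ker (LinearMap.snd F M F) : Submodule F (M × F))) := by
    rw [hker]
    exact LinearEquiv.finrank_eq (Submodule.comapSubtypeEquivOfLe inf_le_left)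
  have h2 := LinearMap.finrank_range_add_finrank_ker g
  rw [hrange, hkereq, hk] at h2
  omega

end Aux

section Step
variable {F : Type*} [Field F]
variable {M : Type*} [AddCommGroup M] [Module F M]

/-- existence of a vector with last coordinate 1 -/
lemma exists_snd_one (W : Submodule F (M × F))
    (hW : ¬ W ≤ LinearMap.ker (LinearMap.snd F M F)) :
    ∃ w : M × F, w ∈ W ∧ w.2 = 1 := by
  rw [SetLike.le_def] at hW
  push_neg at hW
  obtain ⟨v, hv, hv2⟩ := hW
  have hv2' : v.2 ≠ 0 := by simpa using hv2
  exact ⟨v.2⁻¹ • v, Submodule.smul_mem _ _ hv, by simp [inv_mul_cancel₀ hv2']⟩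

open Classical in
/-- a choice of a vector with last coordinate 1 -/
noncomputable def pick (W : Submodule F (M × F)) : M × F :=
  if h : ∃ w : M × F, w ∈ W ∧ w.2 = 1 then h.choose else 0

lemma pick_spec (W : Submodule F (M × F))
    (hW : ¬ W ≤ LinearMap.ker (LinearMap.snd F M F)) :
    pick W ∈ W ∧ (pick W).2 = 1 := by
  have h := exists_snd_one W hW
  rw [pick]
  rw [dif_pos h]
  exact h.choose_spec

lemma quot_heq {k : ℕ} {A₁ A₂ : {U : Submodule F M // finrank F U = k}} (h : A₁ = A₂)
    {m₁ m₂ : M}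
    (hq : HEq (Submodule.Quotient.mk (p := A₁.1) m₁) (Submodule.Quotient.mk (p := A₂.1) m₂)) :
    m₁ - m₂ ∈ A₂.1 := by
  subst h
  exact (Submodule.Quotient.eq _).mp (eq_of_heq hq)

/-- membership transfer: if the first coordinates agree mod U then w₁ ∈ W₂ -/
lemma mem_of_pick (W₁ W₂ : Submodule F (M × F)) (w₁ w₂ : M × F)
    (hw₁ : w₁ ∈ W₁) (hw₂ : w₂ ∈ W₂) (h₁ : w₁.2 = 1) (h₂ : w₂.2 = 1)
    (hm : w₁.1 - w₂.1 ∈ (W₂ ⊓ LinearMap.ker (LinearMap.snd F M F)).map (LinearMap.fst F M F)) :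
    w₁ ∈ W₂ := by
  obtain ⟨v, hv, hvfst⟩ := hm
  have hv' : v ∈ W₂ ⊓ LinearMap.ker (LinearMap.snd F M F) := hv
  rw [Submodule.mem_inf, LinearMap.mem_ker] at hv'
  have hvfst' : v.1 = w₁.1 - w₂.1 := hvfst
  have hv2 : v.2 = 0 := hv'.2
  have hveq : v = (w₁.1 - w₂.1, (0:F)) := by
    rw [← hvfst', ← hv2]
  have : w₁ = w₂ + v := by
    rw [hveq]
    apply Prod.ext <;> simp [h₁, h₂]
  rw [this]
  exact W₂.add_mem hw₂ hv'.1

lemma le_of_data (W₁ W₂ : Submodule F (M × F)) (w₁ : M × F)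
    (hw₁ : w₁ ∈ W₂) (h₁ : w₁.2 = 1)
    (hinf : W₁ ⊓ LinearMap.ker (LinearMap.snd F M F)
      = W₂ ⊓ LinearMap.ker (LinearMap.snd F M F))
    (hw₁W : w₁ ∈ W₁) : W₁ ≤ W₂ := by
  intro v hv
  have hmem : v - v.2 • w₁ ∈ W₁ ⊓ LinearMap.ker (LinearMap.snd F M F) := by
    refine ⟨W₁.sub_mem hv (W₁.smul_mem _ hw₁W), ?_⟩
    simp [LinearMap.mem_ker, h₁]
  rw [hinf] at hmem
  have := W₂.add_mem hmem.1 (W₂.smul_mem v.2 hw₁)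
  simpa using this

variable [Finite F] [Finite M]

instance instFinSub' : Finite (Submodule F (M × F)) :=
  Finite.of_injective (fun W => (W : Set (M × F))) SetLike.coe_injective

instance instFinSubM : Finite (Submodule F M) :=
  Finite.of_injective (fun W => (W : Set M)) SetLike.coe_injective

open Classical in
/-- The injection underlying the Gaussian-binomial recursion bound. -/
noncomputable def Psi (k : ℕ) (W : {W : Submodule F (M × F) // finrank F W = k + 1}) :
    {W' : Submodule F M // finrank F W' = k + 1} ⊕
      (Σ U : {U : Submodule F M // finrank F U = k}, M ⧸ (U : Submodule F M)) :=
  if hW : (W : Submodule F (M × F)) ≤ LinearMap.ker (LinearMap.snd F M F) then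
    Sum.inl ⟨(W : Submodule F (M × F)).map (LinearMap.fst F M F),
      by rw [aux_finrank_map _ hW, W.2]⟩
  else
    Sum.inr ⟨⟨((W : Submodule F (M × F)) ⊓ LinearMap.ker (LinearMap.snd F M F)).map
        (LinearMap.fst F M F),
        by rw [aux_finrank_map _ inf_le_right,
             aux_finrank_inf (W : Submodule F (M × F)) _
               (pick_spec _ hW).1 (pick_spec _ hW).2 W.2]⟩,
      Submodule.Quotient.mk (pick (W : Submodule F (M × F))).1⟩

lemma Psi_injective (k : ℕ) : Function.Injective (Psi (F := F) (M := M) k) := by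
  intro W₁ W₂ h
  unfold Psi at h
  by_cases h1 : (W₁ : Submodule F (M × F)) ≤ LinearMap.ker (LinearMap.snd F M F) <;>
    by_cases h2 : (W₂ : Submodule F (M × F)) ≤ LinearMap.ker (LinearMap.snd F M F)
  · rw [dif_pos h1, dif_pos h2] at h
    have hval := congrArg Subtype.val (Sum.inl.inj h)
    apply Subtype.ext
    rw [← aux_recover _ h1, ← aux_recover _ h2]
    exact congrArg _ hval
  · rw [dif_pos h1, dif_neg h2] at h
    exact absurd h (by simp)
  · rw [dif_neg h1, dif_pos h2] at h
    exact absurd h (by simp)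
  · rw [dif_neg h1, dif_neg h2] at h
    obtain ⟨hA, hq⟩ := Sigma.mk.inj_iff.mp (Sum.inr.inj h)
    have hUval := congrArg Subtype.val hA
    have hinf : (W₁ : Submodule F (M × F)) ⊓ LinearMap.ker (LinearMap.snd F M F)
        = (W₂ : Submodule F (M × F)) ⊓ LinearMap.ker (LinearMap.snd F M F) := by
      rw [← aux_recover _ (inf_le_right (a := (W₁ : Submodule F (M × F)))),
          ← aux_recover _ (inf_le_right (a := (W₂ : Submodule F (M × F))))]
      exact congrArg _ hUval
    set w₁ := pick (W₁ : Submodule F (M × F)) with hw₁def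
    set w₂ := pick (W₂ : Submodule F (M × F)) with hw₂def
    obtain ⟨hw₁W, hw₁2⟩ := pick_spec _ h1
    obtain ⟨hw₂W, hw₂2⟩ := pick_spec _ h2
    have hmm : w₁.1 - w₂.1 ∈ ((W₂ : Submodule F (M × F)) ⊓
        LinearMap.ker (LinearMap.snd F M F)).map (LinearMap.fst F M F) :=
      quot_heq hA hq
    have hmm' : w₂.1 - w₁.1 ∈ ((W₁ : Submodule F (M × F)) ⊓
        LinearMap.ker (LinearMap.snd F M F)).map (LinearMap.fst F M F) := by
      rw [hinf, ← neg_sub]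
      exact Submodule.neg_mem _ hmm
    have hw1mem : w₁ ∈ (W₂ : Submodule F (M × F)) :=
      mem_of_pick _ _ w₁ w₂ hw₁W hw₂W hw₁2 hw₂2 hmm
    have hw2mem : w₂ ∈ (W₁ : Submodule F (M × F)) :=
      mem_of_pick _ _ w₂ w₁ hw₂W hw₁W hw₂2 hw₁2 hmm'
    apply Subtype.ext
    exact le_antisymm (le_of_data _ _ w₁ hw1mem hw₁2 hinf hw₁W)
      (le_of_data _ _ w₂ hw2mem hw₂2 hinf.symm hw₂W)

lemma card_step (k : ℕ) :
    Nat.card {W : Submodule F (M × F) // finrank F W = k + 1}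
      ≤ Nat.card {W' : Submodule F M // finrank F W' = k + 1}
        + Nat.card {U : Submodule F M // finrank F U = k}
          * Nat.card F ^ (finrank F M - k) := by
  classical
  haveI : Fintype F := Fintype.ofFinite _
  haveI : ∀ U : {U : Submodule F M // finrank F U = k},
      Finite (M ⧸ (U : Submodule F M)) := fun U => Quotient.finite _
  have hinj := Nat.card_le_card_of_injective _ (Psi_injective (F := F) (M := M) k)
  refine hinj.trans ?_
  rw [Nat.card_sum]
  refine Nat.add_le_add_left ?_ _
  -- sigma card
  haveI : Fintype {U : Submodule F M // finrank F U = k} := Fintype.ofFinite _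
  have hfiber : ∀ U : {U : Submodule F M // finrank F U = k},
      Nat.card (M ⧸ (U : Submodule F M)) = Nat.card F ^ (finrank F M - k) := by
    intro U
    haveI : Fintype F := Fintype.ofFinite _
    haveI : Fintype (M ⧸ (U : Submodule F M)) := Fintype.ofFinite _
    rw [Nat.card_eq_fintype_card, Nat.card_eq_fintype_card,
      card_eq_pow_finrank (K := F) (V := M ⧸ (U : Submodule F M))]
    congr 1
    have := Submodule.finrank_quotient_add_finrank (U : Submodule F M)
    have hU := U.2
    omega
  haveI : ∀ U : {U : Submodule F M // finrank F U = k},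
      Fintype (M ⧸ (U : Submodule F M)) := fun U => Fintype.ofFinite _
  rw [Nat.card_eq_fintype_card (α := (Σ U : {U : Submodule F M // finrank F U = k},
      M ⧸ (U : Submodule F M))), Fintype.card_sigma]
  have : ∀ U : {U : Submodule F M // finrank F U = k},
      Fintype.card (M ⧸ (U : Submodule F M)) = Nat.card F ^ (finrank F M - k) := by
    intro U
    rw [← Nat.card_eq_fintype_card]
    exact hfiber U
  rw [Finset.sum_congr rfl (fun U _ => this U), Finset.sum_const, Finset.card_univ,
    smul_eq_mul, Nat.card_eq_fintype_card (α := {U : Submodule F M // finrank F U = k})]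

end Step

lemma card_sub_eq' {F : Type*} [Field F] {M N : Type*} [AddCommGroup M] [Module F M]
    [AddCommGroup N] [Module F N] (e : M ≃ₗ[F] N) (k : ℕ) :
    Nat.card {W : Submodule F M // finrank F W = k}
      = Nat.card {W : Submodule F N // finrank F W = k} := by
  refine Nat.card_congr (Equiv.subtypeEquiv (Submodule.orderIsoMapComap e).toEquiv fun W => ?_)
  have : finrank F (Submodule.map (e : M →ₗ[F] N) W) = finrank F W := LinearEquiv.finrank_map_eq e W
  simp only [RelIso.coe_fn_toEquiv]
  show finrank F W = k ↔ finrank F (Submodule.map (e : M →ₗ[F] N) W) = k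
  rw [this]

lemma gbin_zero {p : ℕ} (hp : p.Prime) (n : ℕ) : gbin p n 0 ≤ 1 := by
  haveI : Fact p.Prime := ⟨hp⟩
  haveI : Subsingleton {W : Submodule (ZMod p) (Fin n → ZMod p) // finrank (ZMod p) W = 0} := by
    constructor
    rintro ⟨W₁, h₁⟩ ⟨W₂, h₂⟩
    have e₁ : W₁ = ⊥ := Submodule.finrank_eq_zero.mp h₁
    have e₂ : W₂ = ⊥ := Submodule.finrank_eq_zero.mp h₂
    exact Subtype.ext (e₁.trans e₂.symm)
  rcases isEmpty_or_nonempty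
      {W : Submodule (ZMod p) (Fin n → ZMod p) // finrank (ZMod p) W = 0} with h | h
  · rw [gbin, Nat.card_of_isEmpty]; omega
  · obtain ⟨x⟩ := h
    haveI : Unique {W : Submodule (ZMod p) (Fin n → ZMod p) // finrank (ZMod p) W = 0} :=
      uniqueOfSubsingleton x
    rw [gbin, Nat.card_unique]

lemma gbin_empty {p : ℕ} (hp : p.Prime) {n k : ℕ} (h : n < k) : gbin p n k = 0 := by
  haveI : Fact p.Prime := ⟨hp⟩
  haveI : IsEmpty {W : Submodule (ZMod p) (Fin n → ZMod p) // finrank (ZMod p) W = k} := by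
    constructor
    rintro ⟨W, hW⟩
    have h1 : finrank (ZMod p) W ≤ finrank (ZMod p) (Fin n → ZMod p) := W.finrank_le
    rw [hW, finrank_fin_fun] at h1
    omega
  rw [gbin, Nat.card_of_isEmpty]

lemma gbin_upper {p : ℕ} (hp : p.Prime) : ∀ n k, gbin p n k ≤ p ^ (k * (n - k) + k) := by
  haveI : Fact p.Prime := ⟨hp⟩
  intro n
  induction n with
  | zero =>
    intro k
    cases k with
    | zero => simpa using gbin_zero hp 0
    | succ k => rw [gbin_empty hp (by omega)]; positivity
  | succ n ih =>
    intro k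
    cases k with
    | zero => simpa using gbin_zero hp (n + 1)
    | succ k =>
      set F := ZMod p
      have e' : (Fin (n + 1) → F) ≃ₗ[F] ((Fin n → F) × F) :=
        (LinearEquiv.funCongrLeft F F (finSumFinEquiv : Fin n ⊕ Fin 1 ≃ Fin (n + 1))).trans
          ((LinearEquiv.sumArrowLequivProdArrow (Fin n) (Fin 1) F F).trans
            ((LinearEquiv.refl F (Fin n → F)).prodCongr
              (LinearEquiv.funUnique (Fin 1) F F)))
      have h1 : gbin p (n + 1) (k + 1)
          ≤ gbin p n (k + 1) + gbin p n k * Nat.card F ^ (finrank F (Fin n → F) - k) := by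
        rw [gbin, card_sub_eq' e' (k + 1)]
        exact card_step k
      rw [finrank_fin_fun, Nat.card_zmod] at h1
      have hp2 : 2 ≤ p := hp.two_le
      have key : ∀ A m : ℕ, p ^ A + p ^ (A + m) ≤ p ^ (A + (m + 1)) := by
        intro A m
        have h1' : (1:ℕ) ≤ p ^ m := Nat.one_le_pow _ _ (by omega)
        have h2' : 2 * p ^ m ≤ p * p ^ m := Nat.mul_le_mul_right _ hp2
        calc p ^ A + p ^ (A + m) = p ^ A * 1 + p ^ A * p ^ m := by rw [pow_add, mul_one]
          _ = p ^ A * (1 + p ^ m) := by ring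
          _ ≤ p ^ A * (p * p ^ m) := by gcongr; omega
          _ = p ^ (A + (m + 1)) := by rw [pow_add, pow_succ]; ring
      rcases le_or_gt (k + 1) n with hkn | hkn
      · refine h1.trans ?_
        have hA := ih (k + 1)
        have hB := ih k
        set t := n - k - 1 with ht
        have hnk : n - k = t + 1 := by omega
        have hnk1 : n - (k + 1) = t := by omega
        have hSnk : n + 1 - (k + 1) = t + 1 := by omega
        rw [hnk1] at hA
        rw [hnk] at hB
        rw [hSnk, hnk]
        refine le_trans (Nat.add_le_add hA (Nat.mul_le_mul_right _ hB)) ?_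
        rw [← pow_add]
        have e1 : k * (t + 1) + k + (t + 1) = ((k + 1) * t + (k + 1)) + k := by ring
        have e2 : (k + 1) * (t + 1) + (k + 1) = ((k + 1) * t + (k + 1)) + (k + 1) := by ring
        rw [e1, e2]
        exact key _ k
      · rcases le_or_gt (k + 1) (n + 1) with hkn' | hkn'
        · -- k = n
          have hk : k = n := by omega
          subst hk
          rw [gbin_empty (p := p) (n := k) (k := k + 1) hp (by omega)] at h1
          refine h1.trans ?_
          calc (0 : ℕ) + gbin p k k * p ^ (k - k) = gbin p k k := by simp
            _ ≤ p ^ (k * (k - k) + k) := ih k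
            _ = p ^ k := by simp
            _ ≤ p ^ (k + 1) := Nat.pow_le_pow_right (by omega) (by omega)
            _ = p ^ ((k + 1) * (k + 1 - (k + 1)) + (k + 1)) := by simp
        · rw [gbin_empty hp (by omega)]
          positivity


theorem layer_product_bounds (p : ℕ) (hp : p.Prime) (G : Type*) [CommGroup G] [Finite G]
    (hG : IsPGroup p G) (r : ℕ) (lam nu : ℕ → ℕ)
    (hlayer : ∀ i, p ^ lam i = layerCard p G i)
    (hlam_anti : Antitone lam) (hnu_anti : Antitone nu)
    (hle : ∀ i, nu i ≤ lam i) (hsupp : ∀ i, r ≤ i → lam i = 0) :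
    (∏ i ∈ Finset.range r, p ^ (nu i * (lam i - nu i)) ≤
      ∏ i ∈ Finset.range r,
        p ^ (nu (i + 1) * (lam i - nu i)) * gbin p (lam i - nu (i + 1)) (nu i - nu (i + 1))) ∧
    (∏ i ∈ Finset.range r,
        p ^ (nu (i + 1) * (lam i - nu i)) * gbin p (lam i - nu (i + 1)) (nu i - nu (i + 1)) ≤
      p ^ nu 0 * ∏ i ∈ Finset.range r, p ^ (nu i * (lam i - nu i))) := by
  have hp1 : 1 ≤ p := hp.one_lt.le
  have hsplit : ∀ i, nu (i + 1) * (lam i - nu i) + (nu i - nu (i + 1)) * (lam i - nu i)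
      = nu i * (lam i - nu i) := by
    intro i
    have hcb : nu (i + 1) ≤ nu i := hnu_anti (by omega)
    rw [← Nat.add_mul, Nat.add_sub_cancel' hcb]
  have hsub : ∀ i, (lam i - nu (i + 1)) - (nu i - nu (i + 1)) = lam i - nu i := by
    intro i
    have hcb : nu (i + 1) ≤ nu i := hnu_anti (by omega)
    have := hle i
    omega
  constructor
  · refine Finset.prod_le_prod (fun i _ => Nat.zero_le _) (fun i _ => ?_)
    have hcb : nu (i + 1) ≤ nu i := hnu_anti (by omega)
    have h1 : p ^ ((nu i - nu (i + 1)) *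
        ((lam i - nu (i + 1)) - (nu i - nu (i + 1))))
        ≤ gbin p (lam i - nu (i + 1)) (nu i - nu (i + 1)) := by
      refine gbin_lower hp ?_
      have := hle i
      omega
    rw [hsub i] at h1
    calc p ^ (nu i * (lam i - nu i))
        = p ^ (nu (i + 1) * (lam i - nu i)) * p ^ ((nu i - nu (i + 1)) * (lam i - nu i)) := by
          rw [← pow_add, hsplit i]
      _ ≤ p ^ (nu (i + 1) * (lam i - nu i)) * gbin p (lam i - nu (i + 1)) (nu i - nu (i + 1)) :=
          Nat.mul_le_mul_left _ h1
  · have tele : ∀ m : ℕ, ∑ i ∈ Finset.range m, (nu i - nu (i + 1)) = nu 0 - nu m := by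
      intro m
      induction m with
      | zero => simp
      | succ m ih =>
        rw [Finset.sum_range_succ, ih]
        have h1 : nu m ≤ nu 0 := hnu_anti (by omega)
        have h2 : nu (m + 1) ≤ nu m := hnu_anti (by omega)
        omega
    calc ∏ i ∈ Finset.range r,
          p ^ (nu (i + 1) * (lam i - nu i)) * gbin p (lam i - nu (i + 1)) (nu i - nu (i + 1))
        ≤ ∏ i ∈ Finset.range r,
          p ^ (nu i - nu (i + 1)) * p ^ (nu i * (lam i - nu i)) := by
          refine Finset.prod_le_prod (fun i _ => Nat.zero_le _) (fun i _ => ?_)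
          have h2 := gbin_upper hp (lam i - nu (i + 1)) (nu i - nu (i + 1))
          rw [hsub i] at h2
          calc p ^ (nu (i + 1) * (lam i - nu i)) * gbin p (lam i - nu (i + 1)) (nu i - nu (i + 1))
              ≤ p ^ (nu (i + 1) * (lam i - nu i)) *
                p ^ ((nu i - nu (i + 1)) * (lam i - nu i) + (nu i - nu (i + 1))) :=
                Nat.mul_le_mul_left _ h2
            _ = p ^ (nu i - nu (i + 1)) * p ^ (nu i * (lam i - nu i)) := by
                rw [← pow_add, ← pow_add, ← Nat.add_assoc, hsplit i, Nat.add_comm]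
      _ = (∏ i ∈ Finset.range r, p ^ (nu i - nu (i + 1))) *
            ∏ i ∈ Finset.range r, p ^ (nu i * (lam i - nu i)) := Finset.prod_mul_distrib
      _ ≤ p ^ nu 0 * ∏ i ∈ Finset.range r, p ^ (nu i * (lam i - nu i)) := by
          refine Nat.mul_le_mul_right _ ?_
          rw [Finset.prod_pow_eq_pow_sum, tele r]
          exact Nat.pow_le_pow_right (by omega) (by omega)
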